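/- With the semi-discrete Green function Gⁿ as defined, for all t > 0 and x ∈ [0,1], ∫₀¹ (Gⁿ(t,x,y))² dy ≤ 1 + √(π/(8t)). -/

import Mathlib

open Real MeasureTheory

/-- Left grid point `⌊ny⌋/n`. -/
noncomputable def kappa (n : ℕ) (y : ℝ) : ℝ := (⌊(n : ℝ) * y⌋ : ℝ) / n

/-- `e_j(x) = e^{2πi j x}`. -/
noncomputable def efun (j : ℕ) (x : ℝ) : ℂ :=
  Complex.exp (2 * (π : ℂ) * Complex.I * (j : ℂ) * (x : ℂ))

/-- Piecewise-linear interpolation of `e_j` on the grid `{k/n}`. -/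
noncomputable def efunInterp (n j : ℕ) (x : ℝ) : ℂ :=
  efun j (kappa n x) +
    (((n : ℝ) * x - (n : ℝ) * kappa n x : ℝ) : ℂ) *
      (efun j (kappa n x + 1 / n) - efun j (kappa n x))

/-- Eigenvalues `λⱼⁿ = -4n² sin²(jπ/n)`. -/
noncomputable def lamn (n j : ℕ) : ℝ := -4 * (n : ℝ) ^ 2 * Real.sin ((j : ℝ) * π / n) ^ 2

/-- The semi-discrete Green function
`Gⁿ(t,x,y) = ∑_{j=0}^{n-1} e^{λⱼⁿ t} eⱼⁿ(x) ēⱼ(κₙ(y))`. -/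
noncomputable def Gsemi (n : ℕ) (t x y : ℝ) : ℂ :=
  ∑ j ∈ Finset.range n,
    (Real.exp (lamn n j * t) : ℂ) * efunInterp n j x * (starRingEnd ℂ) (efun j (kappa n y))

lemma abs_efun (j : ℕ) (u : ℝ) : ‖efun j u‖ = 1 := by
  rw [efun, Complex.norm_exp]
  norm_num [Complex.mul_re, Complex.mul_im]

lemma efun_mul_conj (j l : ℕ) (u : ℝ) :
    efun l u * (starRingEnd ℂ) (efun j u)
      = Complex.exp (2 * (π : ℂ) * Complex.I * ((l : ℂ) - (j : ℂ)) * (u : ℂ)) := by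
  rw [efun, efun, ← Complex.exp_conj, ← Complex.exp_add]
  congr 1
  simp only [map_mul, Complex.conj_I, Complex.conj_ofNat, Complex.conj_natCast,
    Complex.conj_ofReal]
  ring

lemma dft_orth (n : ℕ) (hn : 0 < n) (j l : ℕ) (hj : j < n) (hl : l < n) :
    ∑ k ∈ Finset.range n, efun l ((k : ℝ) / n) * (starRingEnd ℂ) (efun j ((k : ℝ) / n))
      = if j = l then (n : ℂ) else 0 := by
  have hn' : (n : ℂ) ≠ 0 := Nat.cast_ne_zero.2 hn.ne'
  simp only [efun_mul_conj]
  set z : ℂ := Complex.exp (2 * (π : ℂ) * Complex.I * ((l : ℂ) - (j : ℂ)) / n) with hz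
  have hterm : ∀ k : ℕ, Complex.exp (2 * (π : ℂ) * Complex.I * ((l : ℂ) - (j : ℂ)) * (((k:ℝ) / n : ℝ) : ℂ)) = z ^ k := by
    intro k
    rw [hz, ← Complex.exp_nat_mul]
    congr 1
    push_cast
    ring
  rw [Finset.sum_congr rfl fun k _ => hterm k]
  by_cases h : j = l
  · subst h
    simp [hz]
  · rw [if_neg h]
    have hzn : z ^ n = 1 := by
      rw [hz, ← Complex.exp_nat_mul]
      have : (n : ℂ) * (2 * (π : ℂ) * Complex.I * ((l : ℂ) - (j : ℂ)) / n)
          = ((l : ℤ) - (j : ℤ) : ℤ) * (2 * (π : ℂ) * Complex.I) := by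
        field_simp
        push_cast
        ring
      rw [this, Complex.exp_int_mul_two_pi_mul_I]
    have hz1 : z ≠ 1 := by
      rw [hz, Ne, Complex.exp_eq_one_iff]
      rintro ⟨m, hm⟩
      have hπ : (π : ℂ) ≠ 0 := by exact_mod_cast Real.pi_ne_zero
      have hI : Complex.I ≠ 0 := Complex.I_ne_zero
      have h2 : (2 : ℂ) * π * Complex.I ≠ 0 := by simp [hπ, hI]
      have hcast : ((l : ℂ) - (j : ℂ)) = (m : ℂ) * n := by
        have h3 : (2 : ℂ) * π * Complex.I * (((l : ℂ) - j)) = 2 * π * Complex.I * ((m : ℂ) * n) := by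
          field_simp at hm
          linear_combination (2 * (π : ℂ) * Complex.I) * hm
        exact mul_left_cancel₀ h2 h3
      have hint : ((l : ℤ) - (j : ℤ)) = m * n := by
        exact_mod_cast hcast
      have habs : ((l : ℤ) - (j : ℤ)).natAbs < n := by
        omega
      have hne : ((l : ℤ) - (j : ℤ)) ≠ 0 := by
        intro h0; apply h; omega
      rcases eq_or_ne m 0 with rfl | hm0
      · simp at hint; omega
      · have : (n : ℤ) ≤ |(l : ℤ) - (j : ℤ)| := by
          rw [hint, abs_mul]
          calc (n : ℤ) = 1 * n := (one_mul _).symm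
          _ ≤ |m| * |(n:ℤ)| := by
              apply mul_le_mul
              · exact Int.one_le_abs hm0
              · simp
              · positivity
              · positivity
        rw [Int.abs_eq_natAbs] at this
        omega
    rw [geom_sum_eq hz1, hzn]
    simp

lemma abs_efunInterp_le (n j : ℕ) (x : ℝ) : ‖efunInterp n j x‖ ≤ 1 := by
  set θ : ℝ := (n : ℝ) * x - (n : ℝ) * kappa n x with hθ
  have hθ0 : 0 ≤ θ := by
    rw [hθ, kappa]
    rcases Nat.eq_zero_or_pos n with rfl | hn
    · simp
    · have hn' : (0:ℝ) < n := by exact_mod_cast hn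
      rw [mul_div_cancel₀ _ hn'.ne']
      have := Int.floor_le ((n:ℝ) * x)
      linarith
  have hθ1 : θ ≤ 1 := by
    rw [hθ, kappa]
    rcases Nat.eq_zero_or_pos n with rfl | hn
    · simp
    · have hn' : (0:ℝ) < n := by exact_mod_cast hn
      rw [mul_div_cancel₀ _ hn'.ne']
      have := Int.lt_floor_add_one ((n:ℝ) * x)
      linarith
  have : efunInterp n j x = ((1 - θ : ℝ) : ℂ) * efun j (kappa n x)
      + ((θ : ℝ) : ℂ) * efun j (kappa n x + 1 / n) := by
    rw [efunInterp, ← hθ]; push_cast; ring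
  rw [this]
  calc ‖_‖ ≤ ‖((1 - θ : ℝ) : ℂ) * efun j (kappa n x)‖
        + ‖((θ : ℝ) : ℂ) * efun j (kappa n x + 1 / n)‖ := norm_add_le _ _
  _ = |1 - θ| * 1 + |θ| * 1 := by
      rw [norm_mul, norm_mul, abs_efun, abs_efun, Complex.norm_real, Complex.norm_real,
        Real.norm_eq_abs, Real.norm_eq_abs]
  _ ≤ (1 - θ) * 1 + θ * 1 := by
      rw [abs_of_nonneg (by linarith), abs_of_nonneg hθ0]
  _ = 1 := by ring

lemma integral_comp_kappa (n : ℕ) (hn : 0 < n) (H : ℝ → ℝ) :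
    ∫ y in (0:ℝ)..1, H (kappa n y) = (1 / n) * ∑ k ∈ Finset.range n, H ((k : ℝ) / n) := by
  have hn' : (0:ℝ) < n := by exact_mod_cast hn
  set a : ℕ → ℝ := fun k => (k : ℝ) / n with ha
  have hle : ∀ k : ℕ, a k < a (k+1) := fun k => by
    simp only [ha]
    exact (div_lt_div_iff_of_pos_right hn').2 (by push_cast; linarith)
  have hae : ∀ k : ℕ, ∀ᵐ y : ℝ, y ∈ Set.uIoc (a k) (a (k+1)) → H (kappa n y) = H ((k : ℝ) / n) := by
    intro k
    have h1 : ∀ᵐ y : ℝ, y ≠ a (k+1) :=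
      measure_eq_zero_iff_ae_notMem.mp (Real.volume_singleton)
    filter_upwards [h1] with y hy hmem
    rw [Set.uIoc_of_le (hle k).le] at hmem
    have hyo : a k ≤ y ∧ y < a (k+1) := ⟨hmem.1.le, lt_of_le_of_ne hmem.2 hy⟩
    have hfl : ⌊(n : ℝ) * y⌋ = (k : ℤ) := by
      rw [Int.floor_eq_iff]
      constructor
      · have := hyo.1
        simp only [ha] at this
        rw [div_le_iff₀ hn'] at this
        push_cast
        linarith
      · have := hyo.2
        simp only [ha] at this
        rw [lt_div_iff₀ hn'] at this
        push_cast at this ⊢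
        linarith
    rw [kappa, hfl]
    norm_num
  have hint : ∀ k : ℕ, IntervalIntegrable (fun y => H (kappa n y)) volume (a k) (a (k+1)) := by
    intro k
    rw [intervalIntegrable_iff]
    apply (integrableOn_const (C := H ((k : ℝ) / n)) (by exact measure_Ioc_lt_top.ne)).congr
    rw [Filter.EventuallyEq, ae_restrict_iff' measurableSet_uIoc]
    filter_upwards [hae k] with y hy hmem
    exact (hy hmem).symm
  have hval : ∀ k : ℕ, ∫ y in a k..a (k+1), H (kappa n y) = (1 / n) * H ((k : ℝ) / n) := by
    intro k
    rw [intervalIntegral.integral_congr_ae (hae k), intervalIntegral.integral_const]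
    have : a (k+1) - a k = 1 / n := by
      simp only [ha]
      push_cast
      field_simp
      ring
    rw [this, smul_eq_mul]
  have h0 : a 0 = 0 := by simp [ha]
  have h1 : a n = 1 := by simp [ha]; exact hn.ne'
  calc ∫ y in (0:ℝ)..1, H (kappa n y) = ∫ y in (a 0)..(a n), H (kappa n y) := by rw [h0, h1]
  _ = ∑ k ∈ Finset.range n, ∫ y in a k..a (k+1), H (kappa n y) :=
      (intervalIntegral.sum_integral_adjacent_intervals fun k _ => hint k).symm
  _ = ∑ k ∈ Finset.range n, (1 / n) * H ((k : ℝ) / n) := Finset.sum_congr rfl fun k _ => hval k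
  _ = (1 / n) * ∑ k ∈ Finset.range n, H ((k : ℝ) / n) := by rw [Finset.mul_sum]

lemma exp_lamn_le (n j : ℕ) (hj1 : 1 ≤ j) (hjn : j < n) (t : ℝ) (ht : 0 < t) :
    Real.exp (2 * (lamn n j * t)) ≤ Real.exp (-32 * ((min j (n - j) : ℕ) : ℝ)^2 * t) := by
  set m : ℕ := min j (n - j) with hm
  have hn0 : (0:ℝ) < n := by exact_mod_cast (by omega : 0 < n)
  have hm1 : 1 ≤ m := by omega
  have hm2 : 2 * m ≤ n := by omega
  have hmr : (0:ℝ) < m := by exact_mod_cast hm1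
  -- sin(jπ/n)² = sin(mπ/n)²
  have hsin_eq : Real.sin ((j : ℝ) * π / n) ^ 2 = Real.sin ((m : ℝ) * π / n) ^ 2 := by
    rcases le_or_gt j (n - j) with h | h
    · have : m = j := by omega
      rw [this]
    · have hmj : m = n - j := by omega
      have hcast : ((n - j : ℕ) : ℝ) = (n : ℝ) - j := by
        push_cast [Nat.cast_sub hjn.le]; ring
      rw [hmj, hcast]
      have : ((n : ℝ) - j) * π / n = π - (j : ℝ) * π / n := by
        field_simp
      rw [this, Real.sin_pi_sub]
  -- Jordan: sin(mπ/n) ≥ 2m/n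
  have hjordan : 2 * (m : ℝ) / n ≤ Real.sin ((m : ℝ) * π / n) := by
    have harg0 : 0 ≤ (m : ℝ) * π / n := by positivity
    have harg1 : (m : ℝ) * π / n ≤ π / 2 := by
      rw [div_le_div_iff₀ hn0 (by norm_num : (0:ℝ) < 2)]
      have : (2:ℝ) * m ≤ n := by exact_mod_cast hm2
      nlinarith [Real.pi_pos]
    have := Real.mul_le_sin harg0 harg1
    calc 2 * (m : ℝ) / n = 2 / π * ((m : ℝ) * π / n) := by
          field_simp
    _ ≤ Real.sin ((m : ℝ) * π / n) := this
  have hsin_sq : (2 * (m : ℝ) / n) ^ 2 ≤ Real.sin ((j : ℝ) * π / n) ^ 2 := by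
    rw [hsin_eq]
    apply sq_le_sq'
    · have h0 : (0:ℝ) ≤ 2 * (m : ℝ) / n := by positivity
      linarith
    · exact hjordan
  apply Real.exp_le_exp.2
  have hlam : lamn n j ≤ -16 * (m : ℝ)^2 := by
    rw [lamn]
    have : (2 * (m : ℝ) / n) ^ 2 = 4 * (m:ℝ)^2 / (n:ℝ)^2 := by ring
    rw [this] at hsin_sq
    have h2 : 4 * (m:ℝ)^2 / (n:ℝ)^2 * (n:ℝ)^2 ≤ Real.sin ((j : ℝ) * π / n) ^ 2 * (n:ℝ)^2 := by
      apply mul_le_mul_of_nonneg_right hsin_sq (by positivity)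
    rw [div_mul_cancel₀ _ (by positivity : ((n:ℝ)^2) ≠ 0)] at h2
    nlinarith
  nlinarith

lemma sum_gauss_le (t : ℝ) (ht : 0 < t) (M : ℕ) :
    ∑ i ∈ Finset.range M, Real.exp (-32 * ((i:ℝ)+1)^2 * t) ≤ Real.sqrt (π / (32 * t)) := by
  have hb : (0:ℝ) < 32 * t := by linarith
  have hint : Integrable (fun z : ℝ => Real.exp (-(32*t) * z^2)) := integrable_exp_neg_mul_sq hb
  -- termwise bound by interval integral
  have hterm : ∀ i : ℕ, Real.exp (-32 * ((i:ℝ)+1)^2 * t)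
      ≤ ∫ z in ((i:ℝ))..((i:ℝ)+1), Real.exp (-(32*t) * z^2) := by
    intro i
    have hci : IntervalIntegrable (fun z : ℝ => Real.exp (-(32*t) * z^2)) volume (i:ℝ) ((i:ℝ)+1) :=
      hint.intervalIntegrable
    calc Real.exp (-32 * ((i:ℝ)+1)^2 * t)
        = ∫ z in ((i:ℝ))..((i:ℝ)+1), Real.exp (-(32*t) * ((i:ℝ)+1)^2) := by
          rw [intervalIntegral.integral_const]
          simp
          ring_nf
    _ ≤ ∫ z in ((i:ℝ))..((i:ℝ)+1), Real.exp (-(32*t) * z^2) := by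
        apply intervalIntegral.integral_mono_on (by linarith) (by simp) hci
        intro z hz
        apply Real.exp_le_exp.2
        have h0 : (0:ℝ) ≤ z := le_trans (by positivity) hz.1
        have h1 : z ≤ (i:ℝ)+1 := hz.2
        have hz2 : z^2 ≤ ((i:ℝ)+1)^2 := by nlinarith
        nlinarith
  calc ∑ i ∈ Finset.range M, Real.exp (-32 * ((i:ℝ)+1)^2 * t)
      ≤ ∑ i ∈ Finset.range M, ∫ z in ((i:ℝ))..((i:ℝ)+1), Real.exp (-(32*t) * z^2) :=
        Finset.sum_le_sum fun i _ => hterm i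
  _ = ∫ z in (0:ℝ)..(M:ℝ), Real.exp (-(32*t) * z^2) := by
        have := intervalIntegral.sum_integral_adjacent_intervals
          (a := fun i : ℕ => (i : ℝ)) (n := M)
          (fun k _ => hint.intervalIntegrable)
        simp only [Nat.cast_zero] at this
        rw [← this]
        apply Finset.sum_congr rfl
        intro i _
        norm_num
  _ ≤ ∫ z : ℝ, Real.exp (-(32*t) * z^2) := by
        rw [intervalIntegral.integral_of_le (by positivity)]
        apply setIntegral_le_integral hint
        filter_upwards with z
        positivity
  _ = Real.sqrt (π / (32 * t)) := integral_gaussian (32*t)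

lemma sum_exp_lamn_le (n : ℕ) (hn : 3 ≤ n) (t : ℝ) (ht : 0 < t) :
    ∑ j ∈ Finset.range n, Real.exp (2 * (lamn n j * t)) ≤ 1 + Real.sqrt (π / (8 * t)) := by
  have hsplit : Finset.range n = insert 0 (Finset.Ico 1 n) := by
    ext a
    simp only [Finset.mem_range, Finset.mem_insert, Finset.mem_Ico]
    omega
  have hf0 : Real.exp (2 * (lamn n 0 * t)) = 1 := by
    simp [lamn]
  rw [hsplit, Finset.sum_insert (by simp), hf0]
  have step1 : ∑ j ∈ Finset.Ico 1 n, Real.exp (2 * (lamn n j * t))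
      ≤ ∑ j ∈ Finset.Ico 1 n,
          (Real.exp (-32 * ((j:ℝ))^2 * t) + Real.exp (-32 * (((n - j : ℕ)):ℝ)^2 * t)) := by
    apply Finset.sum_le_sum
    intro j hj
    rw [Finset.mem_Ico] at hj
    refine (exp_lamn_le n j hj.1 hj.2 t ht).trans ?_
    rcases le_or_gt j (n - j) with h | h
    · have : min j (n - j) = j := min_eq_left h
      rw [this]
      nlinarith [Real.exp_pos (-32 * (((n - j : ℕ)):ℝ)^2 * t)]
    · have : min j (n - j) = n - j := min_eq_right h.le
      rw [this]
      nlinarith [Real.exp_pos (-32 * ((j:ℝ))^2 * t)]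
  have step2 : ∑ j ∈ Finset.Ico 1 n, Real.exp (-32 * (((n - j : ℕ)):ℝ)^2 * t)
      = ∑ j ∈ Finset.Ico 1 n, Real.exp (-32 * ((j:ℝ))^2 * t) := by
    apply Finset.sum_nbij' (fun j => n - j) (fun j => n - j)
    · intro a ha; rw [Finset.mem_Ico] at *; omega
    · intro a ha; rw [Finset.mem_Ico] at *; omega
    · intro a ha; rw [Finset.mem_Ico] at ha; omega
    · intro a ha; rw [Finset.mem_Ico] at ha; omega
    · intro a ha; rfl
  have step3 : ∑ j ∈ Finset.Ico 1 n, Real.exp (-32 * ((j:ℝ))^2 * t)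
      ≤ Real.sqrt (π / (32 * t)) := by
    rw [Finset.sum_Ico_eq_sum_range]
    refine le_trans (le_of_eq ?_) (sum_gauss_le t ht (n - 1))
    apply Finset.sum_congr rfl
    intro i _
    push_cast
    ring_nf
  have step4 : 2 * Real.sqrt (π / (32 * t)) = Real.sqrt (π / (8 * t)) := by
    rw [show π / (8 * t) = 4 * (π / (32 * t)) by field_simp; ring,
      Real.sqrt_mul (by norm_num : (0:ℝ) ≤ 4), show Real.sqrt 4 = 2 by
        rw [show (4:ℝ) = 2^2 by norm_num, Real.sqrt_sq (by norm_num)]]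
  rw [Finset.sum_add_distrib] at step1
  nlinarith [step1, step2, step3, step4,
    Finset.sum_nonneg (fun j (_ : j ∈ Finset.Ico 1 n) => (Real.exp_pos (-32 * ((j:ℝ))^2 * t)).le)]

theorem stmt8 (n : ℕ) (hn : 3 ≤ n) (t x : ℝ) (ht : 0 < t) (hx : x ∈ Set.Icc (0 : ℝ) 1) :
    ∫ y in (0 : ℝ)..1, ((Gsemi n t x y).re) ^ 2 ≤ 1 + Real.sqrt (π / (8 * t)) := by
  have hn0 : 0 < n := by omega
  set c : ℕ → ℂ := fun j => (Real.exp (lamn n j * t) : ℂ) * efunInterp n j x with hc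
  set S : ℕ → ℂ := fun k =>
    ∑ j ∈ Finset.range n, c j * (starRingEnd ℂ) (efun j ((k : ℝ) / n)) with hS
  set H : ℝ → ℝ := fun u =>
    ((∑ j ∈ Finset.range n, c j * (starRingEnd ℂ) (efun j u)).re) ^ 2 with hH
  have hint : ∫ y in (0:ℝ)..1, ((Gsemi n t x y).re) ^ 2
      = (1 / n) * ∑ k ∈ Finset.range n, H ((k : ℝ) / n) := by
    rw [← integral_comp_kappa n hn0 H]
    apply intervalIntegral.integral_congr
    intro y _
    simp only [hH, Gsemi, hc]
  -- Parseval
  have key : ∑ k ∈ Finset.range n, S k * (starRingEnd ℂ) (S k)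
      = (n : ℂ) * ∑ j ∈ Finset.range n, c j * (starRingEnd ℂ) (c j) := by
    have expand : ∀ k, S k * (starRingEnd ℂ) (S k)
        = ∑ j ∈ Finset.range n, ∑ l ∈ Finset.range n,
            (c j * (starRingEnd ℂ) (c l)) *
              (efun l ((k : ℝ) / n) * (starRingEnd ℂ) (efun j ((k : ℝ) / n))) := by
      intro k
      rw [hS]
      simp only
      rw [map_sum, Finset.sum_mul_sum]
      apply Finset.sum_congr rfl
      intro j _
      apply Finset.sum_congr rfl
      intro l _
      rw [map_mul, Complex.conj_conj]
      ring
    calc ∑ k ∈ Finset.range n, S k * (starRingEnd ℂ) (S k)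
        = ∑ k ∈ Finset.range n, ∑ j ∈ Finset.range n, ∑ l ∈ Finset.range n,
            (c j * (starRingEnd ℂ) (c l)) *
              (efun l ((k : ℝ) / n) * (starRingEnd ℂ) (efun j ((k : ℝ) / n))) :=
          Finset.sum_congr rfl fun k _ => expand k
    _ = ∑ j ∈ Finset.range n, ∑ l ∈ Finset.range n, (c j * (starRingEnd ℂ) (c l)) *
            ∑ k ∈ Finset.range n,
              (efun l ((k : ℝ) / n) * (starRingEnd ℂ) (efun j ((k : ℝ) / n))) := by
          rw [Finset.sum_comm]
          apply Finset.sum_congr rfl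
          intro j _
          rw [Finset.sum_comm]
          apply Finset.sum_congr rfl
          intro l _
          rw [Finset.mul_sum]
    _ = ∑ j ∈ Finset.range n, ∑ l ∈ Finset.range n, (c j * (starRingEnd ℂ) (c l)) *
            (if j = l then (n : ℂ) else 0) := by
          apply Finset.sum_congr rfl; intro j hj
          apply Finset.sum_congr rfl; intro l hl
          rw [dft_orth n hn0 j l (Finset.mem_range.1 hj) (Finset.mem_range.1 hl)]
    _ = ∑ j ∈ Finset.range n, (c j * (starRingEnd ℂ) (c j)) * (n : ℂ) := by
          apply Finset.sum_congr rfl; intro j hj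
          rw [Finset.sum_eq_single j]
          · simp
          · intro l _ hne
            rw [if_neg (Ne.symm hne), mul_zero]
          · intro h; exact absurd hj h
    _ = (n : ℂ) * ∑ j ∈ Finset.range n, c j * (starRingEnd ℂ) (c j) := by
          rw [Finset.mul_sum]
          apply Finset.sum_congr rfl
          intro j _
          ring
  -- real version
  have keyR : ∑ k ∈ Finset.range n, Complex.normSq (S k)
      = (n : ℝ) * ∑ j ∈ Finset.range n, Complex.normSq (c j) := by
    have h1 : ((∑ k ∈ Finset.range n, S k * (starRingEnd ℂ) (S k)).re : ℝ)
        = ∑ k ∈ Finset.range n, Complex.normSq (S k) := by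
      rw [Complex.re_sum]
      apply Finset.sum_congr rfl
      intro k _
      rw [Complex.mul_conj]
      simp
    have h2 : (((n : ℂ) * ∑ j ∈ Finset.range n, c j * (starRingEnd ℂ) (c j)).re : ℝ)
        = (n : ℝ) * ∑ j ∈ Finset.range n, Complex.normSq (c j) := by
      rw [show ((n:ℂ) * ∑ j ∈ Finset.range n, c j * (starRingEnd ℂ) (c j))
          = ((n:ℝ) : ℂ) * ∑ j ∈ Finset.range n, c j * (starRingEnd ℂ) (c j) by norm_num,
        Complex.re_ofReal_mul, Complex.re_sum]
      congr 1
      apply Finset.sum_congr rfl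
      intro j _
      rw [Complex.mul_conj]
      simp
    rw [← h1, ← h2, key]
  -- bound H (k/n) ≤ normSq (S k)
  have hHle : ∀ k : ℕ, H ((k : ℝ) / n) ≤ Complex.normSq (S k) := by
    intro k
    rw [hH, Complex.normSq_apply]
    simp only [hS]
    nlinarith [sq_nonneg ((∑ j ∈ Finset.range n, c j * (starRingEnd ℂ) (efun j ((k : ℝ) / n))).im)]
  -- normSq (c j) ≤ exp (2 (lamn t))
  have hcle : ∀ j, Complex.normSq (c j) ≤ Real.exp (2 * (lamn n j * t)) := by
    intro j
    rw [hc]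
    simp only [Complex.normSq_mul, Complex.normSq_ofReal]
    have h1 : Complex.normSq (efunInterp n j x) ≤ 1 := by
      rw [← Complex.sq_norm]
      have := abs_efunInterp_le n j x
      nlinarith [norm_nonneg (efunInterp n j x)]
    have h2 : Real.exp (lamn n j * t) * Real.exp (lamn n j * t) = Real.exp (2 * (lamn n j * t)) := by
      rw [← Real.exp_add]; ring_nf
    calc Real.exp (lamn n j * t) * Real.exp (lamn n j * t) * Complex.normSq (efunInterp n j x)
        ≤ Real.exp (lamn n j * t) * Real.exp (lamn n j * t) * 1 := by
          apply mul_le_mul_of_nonneg_left h1 (by positivity)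
    _ = Real.exp (2 * (lamn n j * t)) := by rw [mul_one, h2]
  calc ∫ y in (0:ℝ)..1, ((Gsemi n t x y).re) ^ 2
      = (1 / n) * ∑ k ∈ Finset.range n, H ((k : ℝ) / n) := hint
  _ ≤ (1 / n) * ∑ k ∈ Finset.range n, Complex.normSq (S k) := by
      apply mul_le_mul_of_nonneg_left (Finset.sum_le_sum fun k _ => hHle k) (by positivity)
  _ = ∑ j ∈ Finset.range n, Complex.normSq (c j) := by
      rw [keyR]
      field_simp
  _ ≤ ∑ j ∈ Finset.range n, Real.exp (2 * (lamn n j * t)) :=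
      Finset.sum_le_sum fun j _ => hcle j
  _ ≤ 1 + Real.sqrt (π / (8 * t)) := sum_exp_lamn_le n hn t ht
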